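/- For n, k ≥ 2, the number a_{n,k} of bargraphs of semiperimeter n whose first descent has length k satisfies a_{n,k} = a_{n-1,k} + a_{n-1,k-1}. -/

import Mathlib

/-- Steps of bargraphs / Motzkin paths. -/
inductive Step where
  | U : Step
  | H : Step
  | D : Step
deriving DecidableEq

/-- Vertical displacement of a step. -/
def Step.val : Step → ℤ
  | .U => 1
  | .H => 0
  | .D => -1

/-- Mirror of a step (swap U and D). -/
def Step.mirror : Step → Step
  | .U => .D
  | .H => .H
  | .D => .U

/-- Final height of a word. -/
def hgt (w : List Step) : ℤ := (w.map Step.val).sum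

/-- A Motzkin path prefix: never goes below the x-axis. -/
def IsMotzkinPrefix (w : List Step) : Prop := ∀ p : List Step, p <+: w → 0 ≤ hgt p

/-- A Motzkin path: never below the x-axis, ends at height 0. -/
def IsMotzkin (w : List Step) : Prop := IsMotzkinPrefix w ∧ hgt w = 0

/-- No peak `UD` and no valley `DU`. -/
def Cornerless (w : List Step) : Prop :=
  ¬ [Step.U, Step.D] <:+: w ∧ ¬ [Step.D, Step.U] <:+: w

/-- A bargraph: starts at the origin, ends on the x-axis, stays strictly above the
x-axis except at the endpoints, and has no factor `UD` or `DU`. -/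
def IsBargraph (w : List Step) : Prop :=
  2 ≤ w.length ∧ hgt w = 0 ∧
    (∀ p : List Step, p <+: w → p ≠ [] → p ≠ w → 0 < hgt p) ∧ Cornerless w

/-- Semiperimeter: number of `U` steps plus number of `H` steps. -/
def semi (w : List Step) : ℕ := w.count Step.U + w.count Step.H

/-- Length of the initial run of `U` steps. -/
def leadU : List Step → ℕ
  | Step.U :: rest => leadU rest + 1
  | _ => 0

/-- Length of the initial run of `H` steps. -/
def leadH : List Step → ℕ
  | Step.H :: rest => leadH rest + 1
  | _ => 0

/-- Length of the initial run of `D` steps. -/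
def leadD : List Step → ℕ
  | Step.D :: rest => leadD rest + 1
  | _ => 0

/-- Length of the first maximal run of `D` steps (0 if none). -/
def firstDescLen : List Step → ℕ
  | [] => 0
  | Step.D :: rest => leadD rest + 1
  | _ :: rest => firstDescLen rest

/-- Number of occurrences of the two-letter factor `a b`. -/
def cnt2 (a b : Step) : List Step → ℕ
  | x :: y :: rest => (if x = a ∧ y = b then 1 else 0) + cnt2 a b (y :: rest)
  | _ => 0

/-- Heights of the columns (`H` steps), starting from a given height. -/
def colHeights : ℤ → List Step → List ℤ
  | _, [] => []
  | h, Step.U :: rest => colHeights (h + 1) rest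
  | h, Step.H :: rest => h :: colHeights h rest
  | h, Step.D :: rest => colHeights (h - 1) rest

/-- Width of the leftmost maximal horizontal segment (0 if none). -/
def lhsW : List Step → ℕ
  | [] => 0
  | Step.H :: rest => leadH rest + 1
  | _ :: rest => lhsW rest

/-- Delete `h` steps at the start of the leftmost horizontal segment. -/
def stripLeadH (h : ℕ) : List Step → List Step
  | [] => []
  | Step.H :: rest => List.drop h (Step.H :: rest)
  | s :: rest => s :: stripLeadH h rest

/-- Number of initial columns of height 1: largest `j` such that the word begins `U H^j`. -/
def iuc : List Step → ℕ
  | Step.U :: rest => leadH rest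
  | _ => 0

/-- Number of maximal horizontal segments. -/
def hsCount : List Step → ℕ
  | [] => 0
  | [Step.H] => 1
  | [_] => 0
  | a :: b :: rest => (if a = Step.H ∧ b ≠ Step.H then 1 else 0) + hsCount (b :: rest)

/-- Mirror image: reverse the word and swap `U` with `D`. -/
def mir (w : List Step) : List Step := (w.reverse).map Step.mirror

/-- Shape of strictly alternating bargraphs:
`U^{i₁} H D^{k₁} H U^{i₂} H D^{k₂} H ⋯ U^{iₘ} H D^{kₘ}` with all `iᵣ, kᵣ ≥ 1`. -/
inductive SAShape : List Step → Prop where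
  | base (i k : ℕ) : 1 ≤ i → 1 ≤ k →
      SAShape (List.replicate i Step.U ++ [Step.H] ++ List.replicate k Step.D)
  | cons (i k : ℕ) (w : List Step) : 1 ≤ i → 1 ≤ k → SAShape w →
      SAShape (List.replicate i Step.U ++ [Step.H] ++ List.replicate k Step.D ++ [Step.H] ++ w)

/-- A strictly alternating bargraph. -/
def IsStrictAlt (w : List Step) : Prop := IsBargraph w ∧ SAShape w

/-- A secondary structure on `{0, …, m-1}`: all consecutive edges are present, every
vertex has at most one non-consecutive neighbour, and there are no crossing edges. -/
def IsSecondaryStructure {m : ℕ} (G : SimpleGraph (Fin m)) : Prop :=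
  (∀ i j : Fin m, (i : ℕ) + 1 = (j : ℕ) → G.Adj i j) ∧
  (∀ i j k : Fin m, G.Adj i j → G.Adj i k →
      (i : ℕ) + 1 ≠ (j : ℕ) → (j : ℕ) + 1 ≠ (i : ℕ) →
      (i : ℕ) + 1 ≠ (k : ℕ) → (k : ℕ) + 1 ≠ (i : ℕ) → j = k) ∧
  ¬ ∃ i j k l : Fin m, (i : ℕ) < (j : ℕ) ∧ (j : ℕ) < (k : ℕ) ∧ (k : ℕ) < (l : ℕ) ∧
      G.Adj i k ∧ G.Adj j l

/-- Generating function of bargraphs: `x` (variable 0) marks `H` steps,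
`y` (variable 1) marks `U` steps. -/
noncomputable def BG : MvPowerSeries (Fin 2) ℚ :=
  fun d => (Nat.card {w : List Step //
    IsBargraph w ∧ w.count Step.H = d 0 ∧ w.count Step.U = d 1} : ℚ)

/-- Generating function of cornerless Motzkin paths. -/
noncomputable def MG : MvPowerSeries (Fin 2) ℚ :=
  fun d => (Nat.card {w : List Step //
    IsMotzkin w ∧ Cornerless w ∧ w.count Step.H = d 0 ∧ w.count Step.U = d 1} : ℚ)

/-- Generating function of bargraphs avoiding the factor `DH`. -/
noncomputable def BDH : MvPowerSeries (Fin 2) ℚ :=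
  fun d => (Nat.card {w : List Step //
    IsBargraph w ∧ ¬ [Step.D, Step.H] <:+: w ∧
      w.count Step.H = d 0 ∧ w.count Step.U = d 1} : ℚ)

/-- Generating function of bargraphs avoiding the factors `DH` and `HH`. -/
noncomputable def BDHHH : MvPowerSeries (Fin 2) ℚ :=
  fun d => (Nat.card {w : List Step //
    IsBargraph w ∧ ¬ [Step.D, Step.H] <:+: w ∧ ¬ [Step.H, Step.H] <:+: w ∧
      w.count Step.H = d 0 ∧ w.count Step.U = d 1} : ℚ)

/-- Generating function of cornerless Motzkin path prefixes ending at height `h`. -/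
noncomputable def Pgf (h : ℕ) : MvPowerSeries (Fin 2) ℚ :=
  fun d => (Nat.card {w : List Step //
    IsMotzkinPrefix w ∧ Cornerless w ∧ hgt w = (h : ℤ) ∧
      w.count Step.H = d 0 ∧ w.count Step.U = d 1} : ℚ)

/-- Decomposition `G = U^a G₁ H G₂ D^a` of a strictly alternating bargraph. -/
def SADecomp (t : ℕ × List Step × List Step) (G : List Step) : Prop :=
  1 ≤ t.1 ∧ IsStrictAlt t.2.1 ∧ IsStrictAlt (Step.U :: (t.2.2 ++ [Step.D])) ∧
    G = List.replicate t.1 Step.U ++ t.2.1 ++ [Step.H] ++ t.2.2 ++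
      List.replicate t.1 Step.D

/- ======================= auxiliary development ======================= -/

instance : Fintype Step := ⟨{Step.U, Step.H, Step.D}, fun x => by cases x <;> simp⟩

section FDaux

open List

abbrev pD : Step → Bool := fun s => decide (s ≠ Step.D)

/-! ### height lemmas -/

lemma hgt_cons (x : Step) (l : List Step) : hgt (x :: l) = x.val + hgt l := by
  simp [hgt]

lemma hgt_append (a b : List Step) : hgt (a ++ b) = hgt a + hgt b := by
  simp [hgt]

lemma hgt_repD (k : ℕ) : hgt (List.replicate k Step.D) = -(k : ℤ) := by
  induction k with
  | zero => simp [hgt]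
  | succ n ih =>
    rw [List.replicate_succ, hgt_cons, ih]
    show (-1 : ℤ) + -(n : ℤ) = -((n : ℕ) + 1 : ℕ)
    push_cast
    ring_nf

lemma hgt_nonneg {q : List Step} (h : ∀ x ∈ q, x ≠ Step.D) : 0 ≤ hgt q := by
  induction q with
  | nil => simp [hgt]
  | cons x t ih =>
    rw [hgt_cons]
    have hx : x ≠ Step.D := h x (mem_cons_self (a := x) (l := t))
    have ht : 0 ≤ hgt t := ih fun y hy => h y (mem_cons_of_mem _ hy)
    cases x with
    | U => simp only [Step.val]; omega
    | H => simp only [Step.val]; omega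
    | D => exact absurd rfl hx

/-! ### count lemmas -/

lemma hgt_counts : ∀ w : List Step, hgt w = (w.count Step.U : ℤ) - w.count Step.D := by
  intro w
  induction w with
  | nil => simp [hgt]
  | cons x t ih =>
    rw [hgt_cons, ih]
    cases x <;> simp [Step.val, List.count_cons] <;> push_cast <;> ring

lemma length_counts : ∀ w : List Step,
    w.length = w.count Step.U + w.count Step.H + w.count Step.D := by
  intro w
  induction w with
  | nil => simp
  | cons x t ih =>
    cases x <;> simp [List.count_cons, ih] <;> omega

lemma bar_length {w : List Step} (hw : IsBargraph w) : w.length ≤ 2 * semi w := by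
  have h0 := hw.2.1
  rw [hgt_counts] at h0
  have : w.count Step.D = w.count Step.U := by omega
  rw [length_counts, this, semi]
  omega

lemma finite_aux (m : ℕ) (X : List Step → Prop) :
    Finite {w : List Step // IsBargraph w ∧ semi w = m ∧ X w} := by
  have h : {w : List Step | IsBargraph w ∧ semi w = m ∧ X w} ⊆
      {l : List Step | l.length ≤ 2 * m} := by
    rintro w ⟨h1, h2, _⟩
    have := bar_length h1
    simp only [Set.mem_setOf_eq]
    omega
  exact ((List.finite_length_le Step (2 * m)).subset h).to_subtype

/-! ### leadD / firstDescLen lemmas -/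

lemma leadD_eq_zero {S : List Step} (h : S.head? ≠ some Step.D) : leadD S = 0 := by
  cases S with
  | nil => rfl
  | cons x t =>
    cases x with
    | U => rfl
    | H => rfl
    | D => exact absurd rfl h

lemma leadD_rep_append (k : ℕ) (S : List Step) :
    leadD (List.replicate k Step.D ++ S) = k + leadD S := by
  induction k with
  | zero => simp
  | succ n ih =>
    rw [List.replicate_succ, List.cons_append]
    show leadD (List.replicate n Step.D ++ S) + 1 = (n + 1) + leadD S
    rw [ih]; omega

lemma fd_cons_U (l : List Step) : firstDescLen (Step.U :: l) = firstDescLen l := rfl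
lemma fd_cons_H (l : List Step) : firstDescLen (Step.H :: l) = firstDescLen l := rfl
lemma fd_cons_D (l : List Step) : firstDescLen (Step.D :: l) = leadD l + 1 := rfl

lemma fd_Dfree_append (r : List Step) :
    ∀ A : List Step, Step.D ∉ A → firstDescLen (A ++ Step.D :: r) = leadD r + 1 := by
  intro A
  induction A with
  | nil => intro _; rfl
  | cons x t ih =>
    intro hA
    have hx : x ≠ Step.D := fun h => hA (h ▸ mem_cons_self (a := x) (l := t))
    have ht : Step.D ∉ t := fun h => hA (mem_cons_of_mem _ h)
    cases x with
    | U => rw [List.cons_append, fd_cons_U]; exact ih ht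
    | H => rw [List.cons_append, fd_cons_H]; exact ih ht
    | D => exact absurd rfl hx

lemma fd_decomp {B S : List Step} {k : ℕ} (hB : Step.D ∉ B) (hk : 1 ≤ k)
    (hS : S.head? ≠ some Step.D) :
    firstDescLen (B ++ [Step.H] ++ List.replicate k Step.D ++ S) = k := by
  obtain ⟨j, rfl⟩ : ∃ j, k = j + 1 := ⟨k - 1, by omega⟩
  have h1 : Step.D ∉ B ++ [Step.H] := by
    simp only [List.mem_append, List.mem_singleton]
    rintro (h | h)
    · exact hB h
    · exact Step.noConfusion h
  have e : B ++ [Step.H] ++ List.replicate (j + 1) Step.D ++ S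
      = (B ++ [Step.H]) ++ Step.D :: (List.replicate j Step.D ++ S) := by
    simp [List.replicate_succ]
  rw [e, fd_Dfree_append _ _ h1, leadD_rep_append, leadD_eq_zero hS]

lemma fd_pos_memD : ∀ w : List Step, 1 ≤ firstDescLen w → Step.D ∈ w := by
  intro w
  induction w with
  | nil => intro h; simp [firstDescLen] at h
  | cons x t ih =>
    intro h
    cases x with
    | U => exact mem_cons_of_mem _ (ih (by rwa [fd_cons_U] at h))
    | H => exact mem_cons_of_mem _ (ih (by rwa [fd_cons_H] at h))
    | D => exact mem_cons_self

/-! ### chain / cornerless lemmas -/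

def R2 (x y : Step) : Prop :=
  ¬(x = Step.U ∧ y = Step.D) ∧ ¬(x = Step.D ∧ y = Step.U)

instance : DecidableRel R2 := fun _ _ => by unfold R2; infer_instance

@[simp] lemma R2_xH (x : Step) : R2 x Step.H := by cases x <;> simp [R2]
@[simp] lemma R2_HD : R2 Step.H Step.D := by simp [R2]
@[simp] lemma R2_DD : R2 Step.D Step.D := by simp [R2]
@[simp] lemma R2_D_iff (y : Step) : R2 Step.D y ↔ y ≠ Step.U := by
  cases y <;> simp [R2]
@[simp] lemma R2_xU_iff (x : Step) : R2 x Step.U ↔ x ≠ Step.D := by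
  cases x <;> simp [R2]

lemma chain'_and {α : Type*} (P Q : α → α → Prop) :
    ∀ l : List α, List.Chain' (fun x y => P x y ∧ Q x y) l ↔
      List.Chain' P l ∧ List.Chain' Q l := by
  intro l
  induction l with
  | nil => simp [List.Chain']
  | cons x t ih =>
    simp only [List.Chain'] at ih ⊢
    rw [List.isChain_cons, List.isChain_cons, List.isChain_cons, ih]
    exact ⟨fun h => ⟨⟨fun y hy => (h.1 y hy).1, h.2.1⟩, fun y hy => (h.1 y hy).2, h.2.2⟩,
      fun h => ⟨fun y hy => ⟨h.1.1 y hy, h.2.1 y hy⟩, h.1.2, h.2.2⟩⟩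

lemma notInfix_chain (a b : Step) :
    ∀ w : List Step, (¬ [a, b] <:+: w) ↔
      List.Chain' (fun x y => ¬(x = a ∧ y = b)) w := by
  intro w
  induction w with
  | nil => simp [List.Chain']
  | cons x t ih =>
    simp only [List.Chain'] at ih ⊢
    rw [List.infix_cons_iff, List.isChain_cons, ← ih]
    have hpre : ([a, b] <+: x :: t) ↔ (x = a ∧ t.head? = some b) := by
      cases t with
      | nil => simp [List.cons_prefix_cons]
      | cons y t' => simp [List.cons_prefix_cons, eq_comm]
    rw [hpre]
    constructor
    · intro h
      refine ⟨fun y hy => ?_, fun hi => h (Or.inr hi)⟩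
      rintro ⟨rfl, rfl⟩
      exact h (Or.inl ⟨rfl, Option.mem_def.mp hy⟩)
    · rintro ⟨h1, h2⟩ (⟨rfl, hh⟩ | hi)
      · exact h1 b (Option.mem_def.mpr hh) ⟨rfl, rfl⟩
      · exact h2 hi

lemma cornerless_chain (w : List Step) : Cornerless w ↔ List.Chain' R2 w := by
  unfold Cornerless
  rw [notInfix_chain, notInfix_chain]
  exact (chain'_and _ _ w).symm

lemma chain'_repD (k : ℕ) : List.Chain' R2 (List.replicate k Step.D) := by
  induction k with
  | zero => simp [List.Chain']
  | succ n ih =>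
    simp only [List.Chain'] at ih ⊢
    rw [List.replicate_succ, List.isChain_cons]
    refine ⟨?_, ih⟩
    intro y hy
    have hmem : y ∈ List.replicate n Step.D := by
      cases n with
      | zero => simp at hy
      | succ m => rw [List.replicate_succ] at hy ⊢; simp_all
    have : y = Step.D := List.eq_of_mem_replicate hmem
    subst this; simp

lemma head?_repD_append (k : ℕ) (hk : 1 ≤ k) (S : List Step) :
    (List.replicate k Step.D ++ S).head? = some Step.D := by
  obtain ⟨j, rfl⟩ : ∃ j, k = j + 1 := ⟨k - 1, by omega⟩
  rw [List.replicate_succ]; simp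

lemma getLast?_mem' {l : List Step} {x : Step} (h : x ∈ l.getLast?) : x ∈ l := by
  have := List.dropLast_append_getLast? x h
  rw [← this]; simp

/-! ### prefix lemmas -/

lemma prefix_append_iff {α : Type*} {u v p : List α} :
    p <+: u ++ v ↔ p <+: u ∨ ∃ q, q <+: v ∧ p = u ++ q := by
  constructor
  · intro h
    rcases le_or_gt p.length u.length with hl | hl
    · exact Or.inl (List.prefix_of_prefix_length_le h (u.prefix_append v) hl)
    · right
      have hu : u <+: p := List.prefix_of_prefix_length_le (u.prefix_append v) h hl.le
      obtain ⟨q, rfl⟩ := hu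
      exact ⟨q, (List.prefix_append_right_inj u).mp h, rfl⟩
  · rintro (h | ⟨q, hq, rfl⟩)
    · exact h.trans (u.prefix_append v)
    · exact (List.prefix_append_right_inj u).mpr hq

lemma prefix_rep {q : List Step} {m : ℕ} (h : q <+: List.replicate m Step.D) :
    ∃ j ≤ m, q = List.replicate j Step.D := by
  refine ⟨q.length, by simpa using h.length_le, ?_⟩
  exact List.eq_replicate_length.mpr fun b hb => List.eq_of_mem_replicate (h.sublist.subset hb)

lemma rep_split {j k : ℕ} (h : j ≤ k) :
    List.replicate k Step.D = List.replicate j Step.D ++ List.replicate (k - j) Step.D := by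
  rw [← List.replicate_add]; congr 1; omega

lemma classify {B S : List Step} {k : ℕ} {m p : List Step}
    (hp : p <+: B ++ m ++ List.replicate k Step.D ++ S) :
    p <+: B ∨ (∃ q, q <+: m ∧ p = B ++ q) ∨
      (∃ j ≤ k, p = B ++ m ++ List.replicate j Step.D) ∨
      (∃ q, q <+: S ∧ p = B ++ m ++ List.replicate k Step.D ++ q) := by
  rcases prefix_append_iff.mp hp with h | ⟨q, hq, rfl⟩
  · rcases prefix_append_iff.mp h with h2 | ⟨q, hq, rfl⟩
    · rcases prefix_append_iff.mp h2 with h3 | ⟨q, hq, rfl⟩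
      · exact Or.inl h3
      · exact Or.inr (Or.inl ⟨q, hq, rfl⟩)
    · obtain ⟨j, hj, rfl⟩ := prefix_rep hq
      exact Or.inr (Or.inr (Or.inl ⟨j, hj, rfl⟩))
  · exact Or.inr (Or.inr (Or.inr ⟨q, hq, rfl⟩))

/-! ### strict positivity -/

def SPos (w : List Step) : Prop :=
  ∀ p : List Step, p <+: w → p ≠ [] → p ≠ w → 0 < hgt p

lemma spos_char (B S : List Step) (k : ℕ) (m : List Step) (hk : 1 ≤ k) (hB : B ≠ [])
    (hm : m ≠ []) (hmpre : ∀ q, q <+: m → 0 ≤ hgt q) :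
    SPos (B ++ m ++ List.replicate k Step.D ++ S) ↔
      ((∀ p, p <+: B → p ≠ [] → 0 < hgt p) ∧
       (∀ j : ℕ, j ≤ k → (j = k → S ≠ []) → 0 < hgt B + hgt m - j) ∧
       (∀ q, q <+: S → q ≠ S → 0 < hgt B + hgt m - k + hgt q)) := by
  have hmlen : 1 ≤ m.length := List.length_pos_iff.mpr hm
  have hBlen : 1 ≤ B.length := List.length_pos_iff.mpr hB
  constructor
  · intro h
    refine ⟨?_, ?_, ?_⟩
    · intro p hp hpne
      refine h p (hp.trans ⟨m ++ List.replicate k Step.D ++ S, by simp [List.append_assoc]⟩)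
        hpne ?_
      intro e
      have hle := hp.length_le
      apply_fun List.length at e
      simp [List.length_append] at e
      omega
    · intro j hj hjk
      have hp : B ++ m ++ List.replicate j Step.D <+:
          B ++ m ++ List.replicate k Step.D ++ S := by
        refine ⟨List.replicate (k - j) Step.D ++ S, ?_⟩
        rw [rep_split hj]; simp only [List.append_assoc]
      have hne : B ++ m ++ List.replicate j Step.D ≠ [] := by simp [hB]
      have hproper : B ++ m ++ List.replicate j Step.D ≠
          B ++ m ++ List.replicate k Step.D ++ S := by
        intro e
        apply_fun List.length at e
        simp [List.length_append] at e
        have hj' : j = k ∧ S.length = 0 := by omega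
        exact hjk hj'.1 (List.length_eq_zero_iff.mp hj'.2)
      have := h _ hp hne hproper
      rw [hgt_append, hgt_append, hgt_repD] at this
      omega
    · intro q hq hqS
      have hp : B ++ m ++ List.replicate k Step.D ++ q <+:
          B ++ m ++ List.replicate k Step.D ++ S := by
        obtain ⟨t, rfl⟩ := hq
        exact ⟨t, by simp [List.append_assoc]⟩
      have hne : B ++ m ++ List.replicate k Step.D ++ q ≠ [] := by simp [hB]
      have hproper : B ++ m ++ List.replicate k Step.D ++ q ≠
          B ++ m ++ List.replicate k Step.D ++ S := by
        intro e
        apply hqS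
        exact List.append_cancel_left e
      have := h _ hp hne hproper
      rw [hgt_append, hgt_append, hgt_append, hgt_repD] at this
      omega
  · rintro ⟨h1, h2, h3⟩ p hp hpne hpw
    have hBpos : 0 < hgt B := h1 B (List.prefix_refl B) hB
    rcases classify hp with h | ⟨q, hq, rfl⟩ | ⟨j, hj, rfl⟩ | ⟨q, hq, rfl⟩
    · exact h1 p h hpne
    · rw [hgt_append]
      have := hmpre q hq
      omega
    · rw [hgt_append, hgt_append, hgt_repD]
      have hcond : j = k → S ≠ [] := by
        intro hjk hS
        apply hpw
        subst hjk hS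
        simp
      have := h2 j hj hcond
      omega
    · rw [hgt_append, hgt_append, hgt_append, hgt_repD]
      have hqS : q ≠ S := by
        intro e; subst e; exact hpw rfl
      have := h3 q hq hqS
      omega

lemma spos1 {B S : List Step} {k : ℕ} (hk : 1 ≤ k) (hB : B ≠ []) :
    SPos (B ++ [Step.H] ++ List.replicate k Step.D ++ S) ↔
      SPos (B ++ [Step.H, Step.H] ++ List.replicate k Step.D ++ S) := by
  have hpre1 : ∀ q : List Step, q <+: [Step.H] → 0 ≤ hgt q := by
    intro q hq
    exact hgt_nonneg fun x hx => by
      have := hq.sublist.subset hx; simp at this; simp [this]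
  have hpre2 : ∀ q : List Step, q <+: [Step.H, Step.H] → 0 ≤ hgt q := by
    intro q hq
    exact hgt_nonneg fun x hx => by
      have := hq.sublist.subset hx; simp at this; simp [this]
  rw [spos_char B S k [Step.H] hk hB (by simp) hpre1,
    spos_char B S k [Step.H, Step.H] hk hB (by simp) hpre2]
  have e : hgt [Step.H] = hgt [Step.H, Step.H] := by simp [hgt, Step.val]
  rw [e]

lemma spos2 {B S : List Step} {k : ℕ} (hk : 1 ≤ k) (hB : B ≠ []) :
    SPos (B ++ [Step.H] ++ List.replicate k Step.D ++ S) ↔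
      SPos (B ++ [Step.U, Step.H] ++ List.replicate (k + 1) Step.D ++ S) := by
  have hpre1 : ∀ q : List Step, q <+: [Step.H] → 0 ≤ hgt q := by
    intro q hq
    exact hgt_nonneg fun x hx => by
      have := hq.sublist.subset hx; simp at this; simp [this]
  have hpre2 : ∀ q : List Step, q <+: [Step.U, Step.H] → 0 ≤ hgt q := by
    intro q hq
    refine hgt_nonneg fun x hx => ?_
    have := hq.sublist.subset hx
    simp at this
    rcases this with h | h <;> simp [h]
  rw [spos_char B S k [Step.H] hk hB (by simp) hpre1,
    spos_char B S (k + 1) [Step.U, Step.H] (by omega) hB (by simp) hpre2]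
  have e1 : hgt [Step.H] = 0 := by simp [hgt, Step.val]
  have e2 : hgt [Step.U, Step.H] = 1 := by simp [hgt, Step.val]
  rw [e1, e2]
  constructor
  · rintro ⟨h1, h2, h3⟩
    refine ⟨h1, ?_, ?_⟩
    · intro j hj hjk
      cases j with
      | zero =>
        have := h1 B (List.prefix_refl B) hB
        push_cast
        omega
      | succ i =>
        have := h2 i (by omega) (by intro e; apply hjk; omega)
        push_cast at this ⊢
        omega
    · intro q hq hqS
      have := h3 q hq hqS
      push_cast at this ⊢
      omega
  · rintro ⟨h1, h2, h3⟩
    refine ⟨h1, ?_, ?_⟩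
    · intro j hj hjk
      have := h2 (j + 1) (by omega) (by intro e; apply hjk; omega)
      push_cast at this ⊢
      omega
    · intro q hq hqS
      have := h3 q hq hqS
      push_cast at this ⊢
      omega
lemma head?_repD (k : ℕ) (hk : k ≠ 0) : (List.replicate k Step.D).head? = some Step.D := by
  obtain ⟨j, rfl⟩ : ∃ j, k = j + 1 := ⟨k - 1, by omega⟩
  rw [List.replicate_succ]; simp

lemma getLast?_repD (k : ℕ) (hk : k ≠ 0) :
    (List.replicate k Step.D).getLast? = some Step.D := by
  rw [List.getLast?_replicate]; simp [hk]

lemma corn1 {B S : List Step} {k : ℕ} (hk : 1 ≤ k) (hB : Step.D ∉ B) :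
    Cornerless (B ++ [Step.H] ++ List.replicate k Step.D ++ S) ↔
      Cornerless (B ++ [Step.H, Step.H] ++ List.replicate k Step.D ++ S) := by
  have hk0 : k ≠ 0 := by omega
  rw [cornerless_chain, cornerless_chain]
  simp [List.Chain', List.isChain_append, List.isChain_cons, List.getLast?_append, List.head?_append,
    getLast?_repD k hk0, head?_repD k hk0, show ∀ k, List.IsChain R2 (List.replicate k Step.D) from chain'_repD]

lemma corn2 {B S : List Step} {k : ℕ} (hk : 1 ≤ k) (hB : Step.D ∉ B) :
    Cornerless (B ++ [Step.H] ++ List.replicate k Step.D ++ S) ↔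
      Cornerless (B ++ [Step.U, Step.H] ++ List.replicate (k + 1) Step.D ++ S) := by
  have hk0 : k ≠ 0 := by omega
  have hBL : ∀ x ∈ B.getLast?, x ≠ Step.D := by
    intro x hx he
    exact hB (he ▸ getLast?_mem' hx)
  rw [cornerless_chain, cornerless_chain]
  simp [List.Chain', List.isChain_append, List.isChain_cons, List.getLast?_append, List.head?_append,
    getLast?_repD, head?_repD, hk0, show ∀ k, List.IsChain R2 (List.replicate k Step.D) from chain'_repD]
  tauto
lemma hgt_nil' : hgt ([] : List Step) = 0 := rfl

lemma Bar1 {B S : List Step} {k : ℕ} (hk : 1 ≤ k) (hB : Step.D ∉ B) (hBne : B ≠ [])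
    (hS : S.head? ≠ some Step.D) :
    IsBargraph (B ++ [Step.H] ++ List.replicate k Step.D ++ S) ↔
      IsBargraph (B ++ [Step.H, Step.H] ++ List.replicate k Step.D ++ S) := by
  unfold IsBargraph
  constructor
  · rintro ⟨h1, h2, h3, h4⟩
    refine ⟨?_, ?_, (spos1 hk hBne).mp h3, (corn1 hk hB).mp h4⟩
    · simp only [List.length_append, List.length_replicate, List.length_cons,
        List.length_nil]
      omega
    · simp only [hgt_append, hgt_repD, hgt_cons, hgt_nil', Step.val] at h2 ⊢
      omega
  · rintro ⟨h1, h2, h3, h4⟩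
    refine ⟨?_, ?_, (spos1 hk hBne).mpr h3, (corn1 hk hB).mpr h4⟩
    · simp only [List.length_append, List.length_replicate, List.length_cons,
        List.length_nil]
      omega
    · simp only [hgt_append, hgt_repD, hgt_cons, hgt_nil', Step.val] at h2 ⊢
      omega

lemma Bar2 {B S : List Step} {k : ℕ} (hk : 1 ≤ k) (hB : Step.D ∉ B) (hBne : B ≠ [])
    (hS : S.head? ≠ some Step.D) :
    IsBargraph (B ++ [Step.H] ++ List.replicate k Step.D ++ S) ↔
      IsBargraph (B ++ [Step.U, Step.H] ++ List.replicate (k + 1) Step.D ++ S) := by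
  unfold IsBargraph
  constructor
  · rintro ⟨h1, h2, h3, h4⟩
    refine ⟨?_, ?_, (spos2 hk hBne).mp h3, (corn2 hk hB).mp h4⟩
    · simp only [List.length_append, List.length_replicate, List.length_cons,
        List.length_nil]
      omega
    · simp only [hgt_append, hgt_repD, hgt_cons, hgt_nil', Step.val] at h2 ⊢
      push_cast at h2 ⊢
      omega
  · rintro ⟨h1, h2, h3, h4⟩
    refine ⟨?_, ?_, (spos2 hk hBne).mpr h3, (corn2 hk hB).mpr h4⟩
    · simp only [List.length_append, List.length_replicate, List.length_cons,
        List.length_nil]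
      omega
    · simp only [hgt_append, hgt_repD, hgt_cons, hgt_nil', Step.val] at h2 ⊢
      push_cast at h2 ⊢
      omega

/-! ### takeWhile decomposition -/

lemma tw_aux (r : List Step) : ∀ A : List Step, Step.D ∉ A →
    (A ++ Step.D :: r).takeWhile pD = A ∧ (A ++ Step.D :: r).dropWhile pD = Step.D :: r := by
  intro A
  induction A with
  | nil =>
    intro _
    constructor <;> simp [pD]
  | cons x t ih =>
    intro hA
    have hx : x ≠ Step.D := fun h => hA (h ▸ mem_cons_self (a := x) (l := t))
    have ht := ih fun h => hA (mem_cons_of_mem _ h)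
    constructor <;>
      simp [List.takeWhile_cons, List.dropWhile_cons, pD, hx, ht.1, ht.2]

lemma takeWhile_decomp {B S : List Step} {k : ℕ} (hB : Step.D ∉ B) (hk : 1 ≤ k) :
    (B ++ [Step.H] ++ List.replicate k Step.D ++ S).takeWhile pD = B ++ [Step.H] ∧
      (B ++ [Step.H] ++ List.replicate k Step.D ++ S).dropWhile pD
        = List.replicate k Step.D ++ S := by
  obtain ⟨j, rfl⟩ : ∃ j, k = j + 1 := ⟨k - 1, by omega⟩
  have h1 : Step.D ∉ B ++ [Step.H] := by simp [hB]
  have e : B ++ [Step.H] ++ List.replicate (j + 1) Step.D ++ S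
      = (B ++ [Step.H]) ++ Step.D :: (List.replicate j Step.D ++ S) := by
    simp [List.replicate_succ]
  have h := tw_aux (List.replicate j Step.D ++ S) (B ++ [Step.H]) h1
  constructor
  · rw [e, h.1]
  · rw [e, h.2, List.replicate_succ, List.cons_append]

/-! ### decomposition of a bargraph at its first descent -/

lemma first_U {w : List Step} (hw : IsBargraph w) : ∃ r, w = Step.U :: r := by
  obtain ⟨hlen, _, hpos, _⟩ := hw
  match w, hlen with
  | x :: y :: t, _ =>
    have h := hpos [x] ⟨y :: t, rfl⟩ (by simp) (by simp)
    cases x with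
    | U => exact ⟨y :: t, rfl⟩
    | H => simp [hgt, Step.val] at h
    | D => simp [hgt, Step.val] at h

lemma split_leadD : ∀ r : List Step,
    r = List.replicate (leadD r) Step.D ++ List.drop (leadD r) r ∧
      (List.drop (leadD r) r).head? ≠ some Step.D := by
  intro r
  induction r with
  | nil => simp [leadD]
  | cons x t ih =>
    cases x with
    | U => refine ⟨by simp [leadD], by simp [leadD]⟩
    | H => refine ⟨by simp [leadD], by simp [leadD]⟩
    | D =>
      have hl : leadD (Step.D :: t) = leadD t + 1 := rfl
      refine ⟨?_, ?_⟩
      · rw [hl, List.replicate_succ, List.cons_append, List.drop_succ_cons]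
        exact congrArg (Step.D :: ·) ih.1
      · rw [hl, List.drop_succ_cons]
        exact ih.2

lemma dropWhile_head_false (p : Step → Bool) :
    ∀ (l : List Step) (x : Step) (r : List Step), l.dropWhile p = x :: r → p x = false := by
  intro l
  induction l with
  | nil => intro x r h; simp at h
  | cons a t ih =>
    intro x r h
    by_cases hp : p a
    · rw [List.dropWhile_cons_of_pos hp] at h
      exact ih x r h
    · rw [List.dropWhile_cons_of_neg hp] at h
      obtain ⟨h1, h2⟩ := List.cons.injEq a t x r ▸ h
      rw [← h1]
      exact Bool.eq_false_iff.mpr hp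

lemma decomp {w : List Step} (hw : IsBargraph w) (h1 : 1 ≤ firstDescLen w) :
    ∃ B S, w = B ++ [Step.H] ++ List.replicate (firstDescLen w) Step.D ++ S ∧
      Step.D ∉ B ∧ S.head? ≠ some Step.D := by
  have hD : Step.D ∈ w := fd_pos_memD w h1
  have hsplit : w.takeWhile pD ++ w.dropWhile pD = w := List.takeWhile_append_dropWhile (p := pD) (l := w)
  have hAfree : Step.D ∉ w.takeWhile pD := by
    intro h
    have := List.mem_takeWhile_imp h
    simp [pD] at this
  have hRne : w.dropWhile pD ≠ [] := by
    intro h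
    rw [h, List.append_nil] at hsplit
    exact hAfree (by rw [hsplit]; exact hD)
  obtain ⟨x, r, hxr⟩ : ∃ x r, w.dropWhile pD = x :: r := by
    cases hR0 : w.dropWhile pD with
    | nil => exact absurd hR0 hRne
    | cons a b => exact ⟨a, b, rfl⟩
  have hx : x = Step.D := by
    have := dropWhile_head_false pD w x r hxr
    simp [pD] at this
    exact this
  subst hx
  rw [hxr] at hsplit
  -- now  hsplit : w.takeWhile pD ++ Step.D :: r = w
  obtain ⟨t0, ht0⟩ := first_U hw
  have hAne : w.takeWhile pD ≠ [] := by
    intro h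
    rw [h, List.nil_append, ht0] at hsplit
    exact absurd hsplit (by simp)
  obtain ⟨B, hAB⟩ : ∃ B, w.takeWhile pD = B ++ [Step.H] := by
    have hlast := List.dropLast_append_getLast hAne
    cases hc : (w.takeWhile pD).getLast hAne with
    | H =>
      refine ⟨(w.takeWhile pD).dropLast, ?_⟩
      conv_lhs => rw [← hlast, hc]
    | D => exact absurd (hc ▸ List.getLast_mem hAne) hAfree
    | U =>
      exfalso
      apply hw.2.2.2.1
      refine ⟨(w.takeWhile pD).dropLast, r, ?_⟩
      conv_rhs => rw [← hsplit, ← hlast, hc]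
      simp [List.append_assoc]
  obtain ⟨hr1, hr2⟩ := split_leadD r
  have hfd : firstDescLen w = leadD r + 1 := by
    conv_lhs => rw [← hsplit, hAB]
    exact fd_Dfree_append r (B ++ [Step.H]) (by rw [← hAB]; exact hAfree)
  refine ⟨B, List.drop (leadD r) r, ?_,
    fun h => hAfree (by rw [hAB]; exact List.mem_append_left _ h), hr2⟩
  rw [hfd]
  conv_lhs => rw [← hsplit, hAB, hr1]
  rw [List.replicate_succ]
  simp only [List.append_assoc, List.cons_append]
/-! ### the partition predicate and the maps -/

def QQ (w : List Step) : Prop :=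
  ((w.takeWhile pD).dropLast).getLast? = some Step.H

instance : DecidablePred QQ := fun w => by unfold QQ; infer_instance

def psi1 (w : List Step) : List Step := (w.takeWhile pD).dropLast ++ w.dropWhile pD
def phi1 (w : List Step) : List Step := w.takeWhile pD ++ [Step.H] ++ w.dropWhile pD
def psi2 (w : List Step) : List Step :=
  (w.takeWhile pD).dropLast.dropLast ++ [Step.H] ++ (w.dropWhile pD).tail
def phi2 (w : List Step) : List Step :=
  (w.takeWhile pD).dropLast ++ [Step.U, Step.H, Step.D] ++ w.dropWhile pD

lemma hgtB_ge {B S : List Step} {k : ℕ} (hk : 1 ≤ k)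
    (hw : IsBargraph (B ++ [Step.H] ++ List.replicate k Step.D ++ S)) :
    (k : ℤ) ≤ hgt B := by
  have hpos := hw.2.2.1
  have hsplit : List.replicate k Step.D
      = List.replicate (k - 1) Step.D ++ [Step.D] := by
    have h : List.replicate k Step.D = List.replicate ((k - 1) + 1) Step.D := by
      congr 1; omega
    rw [h, List.replicate_add]
    rfl
  have hp : B ++ [Step.H] ++ List.replicate (k - 1) Step.D <+:
      B ++ [Step.H] ++ List.replicate k Step.D ++ S := by
    refine ⟨[Step.D] ++ S, ?_⟩
    conv_rhs => rw [hsplit]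
    simp [List.append_assoc]
  have hne : B ++ [Step.H] ++ List.replicate (k - 1) Step.D ≠ [] := by simp
  have hproper : B ++ [Step.H] ++ List.replicate (k - 1) Step.D ≠
      B ++ [Step.H] ++ List.replicate k Step.D ++ S := by
    intro e
    apply_fun List.length at e
    simp [List.length_append] at e
    omega
  have := hpos _ hp hne hproper
  simp only [hgt_append, hgt_repD, hgt_cons, hgt_nil', Step.val] at this
  push_cast at this ⊢
  omega

/-! ### refined decompositions under `QQ` -/

lemma key1 {w : List Step} (hw : IsBargraph w) (h1 : 1 ≤ firstDescLen w) (hq : QQ w) :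
    ∃ B S, Step.D ∉ B ∧ S.head? ≠ some Step.D ∧ B ≠ [] ∧
      w = B ++ [Step.H, Step.H] ++ List.replicate (firstDescLen w) Step.D ++ S := by
  obtain ⟨B0, S, hw_eq, hB0, hS⟩ := decomp hw h1
  set k := firstDescLen w with hk
  have htw : w.takeWhile pD = B0 ++ [Step.H] := by
    rw [hw_eq]; exact (takeWhile_decomp hB0 h1).1
  unfold QQ at hq
  rw [htw, List.dropLast_concat] at hq
  have hB0ne : B0 ≠ [] := by rintro rfl; simp at hq
  have hlast : B0.dropLast ++ [Step.H] = B0 := List.dropLast_append_getLast? Step.H hq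
  refine ⟨B0.dropLast, S, ?_, hS, ?_, ?_⟩
  · intro h; exact hB0 (by rw [← hlast]; exact List.mem_append_left _ h)
  · intro h0
    obtain ⟨t0, ht0⟩ := first_U hw
    have hB0H : B0 = [Step.H] := by
      rw [← hlast, h0, List.nil_append]
    rw [hw_eq, hB0H] at ht0
    exact absurd ht0 (by simp)
  · rw [hw_eq]
    conv_lhs => rw [← hlast]
    simp [List.append_assoc]

lemma key2 {w : List Step} (hw : IsBargraph w) (h2 : 2 ≤ firstDescLen w) (hq : ¬ QQ w) :
    ∃ B S, Step.D ∉ B ∧ S.head? ≠ some Step.D ∧ B ≠ [] ∧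
      w = B ++ [Step.U, Step.H] ++ List.replicate (firstDescLen w) Step.D ++ S := by
  obtain ⟨B0, S, hw_eq, hB0, hS⟩ := decomp hw (by omega)
  set k := firstDescLen w with hk
  have htw : w.takeWhile pD = B0 ++ [Step.H] := by
    rw [hw_eq]; exact (takeWhile_decomp hB0 (by omega)).1
  unfold QQ at hq
  rw [htw, List.dropLast_concat] at hq
  have hB0ne : B0 ≠ [] := by
    rintro rfl
    obtain ⟨t0, ht0⟩ := first_U hw
    rw [hw_eq] at ht0
    exact absurd ht0 (by simp)
  have hlast := List.dropLast_append_getLast hB0ne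
  have hxD : B0.getLast hB0ne ≠ Step.D := fun h => hB0 (h ▸ List.getLast_mem hB0ne)
  have hxH : B0.getLast hB0ne ≠ Step.H := by
    intro h
    exact hq (by rw [List.getLast?_eq_getLast_of_ne_nil hB0ne, h])
  have hxU : B0.getLast hB0ne = Step.U := by
    cases hc : B0.getLast hB0ne with
    | U => rfl
    | H => exact absurd hc hxH
    | D => exact absurd hc hxD
  have hgtB : (k : ℤ) ≤ hgt B0 := hgtB_ge (by omega) (hw_eq ▸ hw)
  have hdne : B0.dropLast ≠ [] := by
    intro h0
    have hB0U : B0 = [Step.U] := by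
      conv_lhs => rw [← hlast, hxU, h0]
      simp
    rw [hB0U] at hgtB
    simp only [hgt_cons, hgt_nil', Step.val] at hgtB
    omega
  refine ⟨B0.dropLast, S, ?_, hS, hdne, ?_⟩
  · intro h; exact hB0 (by rw [← hlast]; exact List.mem_append_left _ h)
  · rw [hw_eq]
    conv_lhs => rw [← hlast, hxU]
    simp [List.append_assoc]

/-! ### specifications of the four maps -/

lemma psi1_spec {w : List Step} (hw : IsBargraph w) (h1 : 1 ≤ firstDescLen w)
    (hq : QQ w) :
    IsBargraph (psi1 w) ∧ semi (psi1 w) + 1 = semi w ∧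
      firstDescLen (psi1 w) = firstDescLen w ∧ phi1 (psi1 w) = w := by
  obtain ⟨B, S, hB, hS, hBne, hw_eq⟩ := key1 hw h1 hq
  set k := firstDescLen w with hk
  have htwB : Step.D ∉ B ++ [Step.H] := by simp [hB]
  have e : B ++ [Step.H, Step.H] ++ List.replicate k Step.D ++ S
      = (B ++ [Step.H]) ++ [Step.H] ++ List.replicate k Step.D ++ S := by
    simp [List.append_assoc]
  have htw1 : w.takeWhile pD = (B ++ [Step.H]) ++ [Step.H] := by
    rw [hw_eq, e]; exact (takeWhile_decomp htwB h1).1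
  have htw2 : w.dropWhile pD = List.replicate k Step.D ++ S := by
    rw [hw_eq, e]; exact (takeWhile_decomp htwB h1).2
  have hψ : psi1 w = B ++ [Step.H] ++ List.replicate k Step.D ++ S := by
    unfold psi1
    rw [htw1, htw2, List.dropLast_concat]
    simp [List.append_assoc]
  refine ⟨?_, ?_, ?_, ?_⟩
  · rw [hψ]
    exact (Bar1 h1 hB hBne hS).mpr (hw_eq ▸ hw)
  · rw [hψ, hw_eq]
    simp [semi, List.count_append, List.count_replicate, List.count_cons]
    omega
  · rw [hψ]
    exact fd_decomp hB h1 hS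
  · unfold phi1
    rw [hψ, (takeWhile_decomp hB h1).1, (takeWhile_decomp hB h1).2, hw_eq]
    simp [List.append_assoc]

lemma phi1_spec {v : List Step} (hv : IsBargraph v) (h1 : 1 ≤ firstDescLen v) :
    IsBargraph (phi1 v) ∧ semi (phi1 v) = semi v + 1 ∧
      firstDescLen (phi1 v) = firstDescLen v ∧ QQ (phi1 v) ∧ psi1 (phi1 v) = v := by
  obtain ⟨C, S, hv_eq, hC, hS⟩ := decomp hv h1
  set f := firstDescLen v with hf
  have hCne : C ≠ [] := by
    rintro rfl
    obtain ⟨t0, ht0⟩ := first_U hv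
    rw [hv_eq] at ht0
    exact absurd ht0 (by simp)
  have htw1 : v.takeWhile pD = C ++ [Step.H] := by
    rw [hv_eq]; exact (takeWhile_decomp hC h1).1
  have htw2 : v.dropWhile pD = List.replicate f Step.D ++ S := by
    rw [hv_eq]; exact (takeWhile_decomp hC h1).2
  have hφ : phi1 v = C ++ [Step.H, Step.H] ++ List.replicate f Step.D ++ S := by
    unfold phi1
    rw [htw1, htw2]
    simp [List.append_assoc]
  have e : C ++ [Step.H, Step.H] ++ List.replicate f Step.D ++ S
      = (C ++ [Step.H]) ++ [Step.H] ++ List.replicate f Step.D ++ S := by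
    simp [List.append_assoc]
  have htwC : Step.D ∉ C ++ [Step.H] := by simp [hC]
  refine ⟨?_, ?_, ?_, ?_, ?_⟩
  · rw [hφ]
    exact (Bar1 h1 hC hCne hS).mp (hv_eq ▸ hv)
  · rw [hφ, hv_eq]
    simp [semi, List.count_append, List.count_replicate, List.count_cons]
    omega
  · rw [hφ, e]
    have := fd_decomp htwC h1 hS
    rw [this]
  · unfold QQ
    rw [hφ, e, (takeWhile_decomp htwC h1).1, List.dropLast_concat, List.getLast?_concat]
  · unfold psi1
    rw [hφ, e, (takeWhile_decomp htwC h1).1, (takeWhile_decomp htwC h1).2,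
      List.dropLast_concat, hv_eq]
    simp [List.append_assoc]

lemma psi2_spec {w : List Step} (hw : IsBargraph w) (h2 : 2 ≤ firstDescLen w)
    (hq : ¬ QQ w) :
    IsBargraph (psi2 w) ∧ semi (psi2 w) + 1 = semi w ∧
      firstDescLen (psi2 w) + 1 = firstDescLen w ∧ phi2 (psi2 w) = w := by
  obtain ⟨B, S, hB, hS, hBne, hw_eq⟩ := key2 hw h2 hq
  set k := firstDescLen w with hk
  have hBU : Step.D ∉ B ++ [Step.U] := by simp [hB]
  have e : B ++ [Step.U, Step.H] ++ List.replicate k Step.D ++ S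
      = (B ++ [Step.U]) ++ [Step.H] ++ List.replicate k Step.D ++ S := by
    simp [List.append_assoc]
  have htw1 : w.takeWhile pD = (B ++ [Step.U]) ++ [Step.H] := by
    rw [hw_eq, e]; exact (takeWhile_decomp hBU (by omega)).1
  have htw2 : w.dropWhile pD = List.replicate k Step.D ++ S := by
    rw [hw_eq, e]; exact (takeWhile_decomp hBU (by omega)).2
  have hrep : List.replicate k Step.D
      = Step.D :: List.replicate (k - 1) Step.D := by
    have h : List.replicate k Step.D
        = List.replicate ((k - 1) + 1) Step.D := by congr 1; omega
    rw [h, List.replicate_succ]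
  have hψ : psi2 w = B ++ [Step.H] ++ List.replicate (k - 1) Step.D ++ S := by
    unfold psi2
    rw [htw1, htw2, List.dropLast_concat, List.dropLast_concat, hrep]
    simp [List.append_assoc]
  refine ⟨?_, ?_, ?_, ?_⟩
  · rw [hψ]
    refine (Bar2 (k := k - 1) (by omega) hB hBne hS).mpr ?_
    have h : k - 1 + 1 = k := by omega
    rw [h]
    exact hw_eq ▸ hw
  · rw [hψ, hw_eq]
    simp [semi, List.count_append, List.count_replicate, List.count_cons]
    omega
  · rw [hψ, fd_decomp hB (by omega) hS]
    omega
  · unfold phi2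
    rw [hψ, (takeWhile_decomp hB (by omega : 1 ≤ k - 1)).1,
      (takeWhile_decomp hB (by omega : 1 ≤ k - 1)).2,
      List.dropLast_concat, hw_eq]
    conv_rhs => rw [hrep]
    simp [List.append_assoc]

lemma phi2_spec {v : List Step} (hv : IsBargraph v) (h1 : 1 ≤ firstDescLen v) :
    IsBargraph (phi2 v) ∧ semi (phi2 v) = semi v + 1 ∧
      firstDescLen (phi2 v) = firstDescLen v + 1 ∧ ¬ QQ (phi2 v) ∧ psi2 (phi2 v) = v := by
  obtain ⟨C, S, hv_eq, hC, hS⟩ := decomp hv h1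
  set f := firstDescLen v with hf
  have hCne : C ≠ [] := by
    rintro rfl
    obtain ⟨t0, ht0⟩ := first_U hv
    rw [hv_eq] at ht0
    exact absurd ht0 (by simp)
  have htw1 : v.takeWhile pD = C ++ [Step.H] := by
    rw [hv_eq]; exact (takeWhile_decomp hC h1).1
  have htw2 : v.dropWhile pD = List.replicate f Step.D ++ S := by
    rw [hv_eq]; exact (takeWhile_decomp hC h1).2
  have hφ : phi2 v = C ++ [Step.U, Step.H] ++ List.replicate (f + 1) Step.D ++ S := by
    unfold phi2
    rw [htw1, htw2, List.dropLast_concat, List.replicate_succ]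
    simp [List.append_assoc]
  have e : C ++ [Step.U, Step.H] ++ List.replicate (f + 1) Step.D ++ S
      = (C ++ [Step.U]) ++ [Step.H] ++ List.replicate (f + 1) Step.D ++ S := by
    simp [List.append_assoc]
  have htwC : Step.D ∉ C ++ [Step.U] := by simp [hC]
  refine ⟨?_, ?_, ?_, ?_, ?_⟩
  · rw [hφ]
    exact (Bar2 h1 hC hCne hS).mp (hv_eq ▸ hv)
  · rw [hφ, hv_eq]
    simp [semi, List.count_append, List.count_replicate, List.count_cons]
    omega
  · rw [hφ, e]
    exact fd_decomp htwC (by omega) hS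
  · unfold QQ
    rw [hφ, e, (takeWhile_decomp htwC (by omega)).1, List.dropLast_concat,
      List.getLast?_concat]
    simp
  · unfold psi2
    rw [hφ, e, (takeWhile_decomp htwC (by omega)).1, (takeWhile_decomp htwC (by omega)).2,
      List.dropLast_concat, List.dropLast_concat, List.replicate_succ, List.cons_append, List.tail_cons, hv_eq]
    simp [List.append_assoc]
end FDaux

/-- the number `a_{n,k}` of bargraphs of semiperimeter `n` whose first
descent has length `k` satisfies `a_{n,k} = a_{n-1,k} + a_{n-1,k-1}` for `n, k ≥ 2`. -/
theorem firstDescent_recurrence :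
    ∀ n k : ℕ, 2 ≤ n → 2 ≤ k →
      Nat.card {w : List Step // IsBargraph w ∧ semi w = n ∧ firstDescLen w = k}
        = Nat.card {w : List Step //
            IsBargraph w ∧ semi w = n - 1 ∧ firstDescLen w = k}
          + Nat.card {w : List Step //
              IsBargraph w ∧ semi w = n - 1 ∧ firstDescLen w = k - 1} := by
  intro n k hn hk
  classical
  haveI FA := finite_aux n (fun w => firstDescLen w = k ∧ QQ w)
  haveI FB := finite_aux n (fun w => firstDescLen w = k ∧ ¬ QQ w)
  have e0 : {w : List Step // IsBargraph w ∧ semi w = n ∧ firstDescLen w = k} ≃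
      {w : List Step // IsBargraph w ∧ semi w = n ∧ (firstDescLen w = k ∧ QQ w)} ⊕
      {w : List Step // IsBargraph w ∧ semi w = n ∧ (firstDescLen w = k ∧ ¬ QQ w)} :=
    (Equiv.sumCompl (fun x : {w : List Step //
        IsBargraph w ∧ semi w = n ∧ firstDescLen w = k} => QQ x.1)).symm.trans
      (Equiv.sumCongr
        ((Equiv.subtypeSubtypeEquivSubtypeInter _ QQ).trans
          (Equiv.subtypeEquivRight (fun w => by tauto)))
        ((Equiv.subtypeSubtypeEquivSubtypeInter _ (fun w => ¬ QQ w)).trans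
          (Equiv.subtypeEquivRight (fun w => by tauto))))
  have eA : {w : List Step // IsBargraph w ∧ semi w = n ∧ (firstDescLen w = k ∧ QQ w)} ≃
      {w : List Step // IsBargraph w ∧ semi w = n - 1 ∧ firstDescLen w = k} :=
    { toFun := fun x => ⟨psi1 x.1, by
        obtain ⟨hb, hs, hfd, hq⟩ := x.2
        have hsp := psi1_spec hb (by rw [hfd]; omega) hq
        refine ⟨hsp.1, ?_, ?_⟩
        · have h := hsp.2.1; omega
        · rw [hsp.2.2.1, hfd]⟩
      invFun := fun y => ⟨phi1 y.1, by
        obtain ⟨hb, hs, hfd⟩ := y.2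
        have hsp := phi1_spec hb (by rw [hfd]; omega)
        refine ⟨hsp.1, ?_, ?_, hsp.2.2.2.1⟩
        · have h := hsp.2.1; omega
        · rw [hsp.2.2.1, hfd]⟩
      left_inv := fun x => Subtype.ext (by
        obtain ⟨hb, hs, hfd, hq⟩ := x.2
        exact (psi1_spec hb (by rw [hfd]; omega) hq).2.2.2)
      right_inv := fun y => Subtype.ext (by
        obtain ⟨hb, hs, hfd⟩ := y.2
        exact (phi1_spec hb (by rw [hfd]; omega)).2.2.2.2) }
  have eB : {w : List Step // IsBargraph w ∧ semi w = n ∧ (firstDescLen w = k ∧ ¬ QQ w)} ≃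
      {w : List Step // IsBargraph w ∧ semi w = n - 1 ∧ firstDescLen w = k - 1} :=
    { toFun := fun x => ⟨psi2 x.1, by
        obtain ⟨hb, hs, hfd, hq⟩ := x.2
        have hsp := psi2_spec hb (by rw [hfd]; omega) hq
        refine ⟨hsp.1, ?_, ?_⟩
        · have h := hsp.2.1; omega
        · have h := hsp.2.2.1; rw [hfd] at h; omega⟩
      invFun := fun y => ⟨phi2 y.1, by
        obtain ⟨hb, hs, hfd⟩ := y.2
        have hsp := phi2_spec hb (by rw [hfd]; omega)
        refine ⟨hsp.1, ?_, ?_, hsp.2.2.2.1⟩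
        · have h := hsp.2.1; omega
        · have h := hsp.2.2.1; rw [hfd] at h; omega⟩
      left_inv := fun x => Subtype.ext (by
        obtain ⟨hb, hs, hfd, hq⟩ := x.2
        exact (psi2_spec hb (by rw [hfd]; omega) hq).2.2.2)
      right_inv := fun y => Subtype.ext (by
        obtain ⟨hb, hs, hfd⟩ := y.2
        exact (phi2_spec hb (by rw [hfd]; omega)).2.2.2.2) }
  rw [Nat.card_congr e0, Nat.card_sum, Nat.card_congr eA, Nat.card_congr eB]
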